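/- Let X be a topological space which is a continuous image of a Čech-complete space P, and suppose every compact subset of X is scattered. Then for every continuous map f : X → Y to a functionally Hausdorff space Y, the image f(X) has cardinality at most max{l(P), ψ(Y)}. -/

import Mathlib

open Cardinal Set Topology

universe u

def FunctionallyHausdorff (X : Type u) [TopologicalSpace X] : Prop :=
  ∀ x y : X, x ≠ y → ∃ f : X → unitInterval, Continuous f ∧ f x = 0 ∧ f y = 1

def IsCechComplete (X : Type u) [TopologicalSpace X] : Prop :=
  ∃ (K : Type u) (_ : TopologicalSpace K) (e : X → K),
    CompactSpace K ∧ T2Space K ∧ IsEmbedding e ∧ DenseRange e ∧ IsGδ (Set.range e)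

noncomputable def lindelofNumber (X : Type u) [TopologicalSpace X] : Cardinal.{u} :=
  sInf {κ : Cardinal.{u} | ℵ₀ ≤ κ ∧ ∀ U : Set (Set X), (∀ u ∈ U, IsOpen u) → ⋃₀ U = Set.univ →
    ∃ V ⊆ U, #↥V ≤ κ ∧ ⋃₀ V = Set.univ}

noncomputable def pseudocharacter (X : Type u) [TopologicalSpace X] : Cardinal.{u} :=
  sInf {κ : Cardinal.{u} | ℵ₀ ≤ κ ∧ ∀ x : X, ∃ 𝒰 : Set (Set X),
    #↥𝒰 ≤ κ ∧ (∀ U ∈ 𝒰, IsOpen U ∧ x ∈ U) ∧ ⋂₀ 𝒰 = ⋂₀ {U : Set X | IsOpen U ∧ x ∈ U}}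

def IsScatteredSet {X : Type u} [TopologicalSpace X] (S : Set X) : Prop :=
  ∀ T ⊆ S, T.Nonempty → ∃ x ∈ T, ∃ U : Set X, IsOpen U ∧ U ∩ T = {x}

def IsKAnalytic (X : Type u) [TopologicalSpace X] : Prop :=
  ∃ (P : Type u) (_ : TopologicalSpace P) (f : P → X),
    LindelofSpace P ∧ IsCechComplete P ∧ Continuous f ∧ Function.Surjective f

def IsAnalyticSpace (X : Type u) [TopologicalSpace X] : Prop :=
  ∃ (P : Type u) (_ : TopologicalSpace P), PolishSpace P ∧
    ∃ f : P → X, Continuous f ∧ Function.Surjective f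

noncomputable def boundingNumber : Cardinal.{0} :=
  sInf {κ : Cardinal.{0} | ∃ B : Set (ℕ → ℕ), #↥B = κ ∧
    ∀ y : ℕ → ℕ, ∃ x ∈ B, {n : ℕ | ¬ x n ≤ y n}.Infinite}

/-! ### Auxiliary machinery for the proof of `stmt2` -/

namespace Stmt2Aux

/-- A cover by at most `κ` sets, each of cardinality at most `κ`, bounds the cardinality. -/
lemma card_cover_le {Y : Type u} {κ : Cardinal.{u}} (hκ : ℵ₀ ≤ κ) {A : Set Y}
    {𝒱 : Set (Set Y)} (h𝒱 : #↥𝒱 ≤ κ) (hcov : A ⊆ ⋃₀ 𝒱) (hsmall : ∀ V ∈ 𝒱, #↥V ≤ κ) :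
    #↥A ≤ κ := by
  have hsub : A ⊆ ⋃ V : ↥𝒱, (V : Set Y) := by
    intro a ha
    obtain ⟨V, hV, haV⟩ := hcov ha
    exact Set.mem_iUnion.2 ⟨⟨V, hV⟩, haV⟩
  refine le_trans (Cardinal.mk_le_mk_of_subset hsub) ?_
  refine le_trans (Cardinal.mk_iUnion_le _) ?_
  rcases isEmpty_or_nonempty ↥𝒱 with hE | hNE
  · have h0 : #↥𝒱 = 0 := Cardinal.mk_eq_zero _
    rw [h0, zero_mul]
    exact (zero_le : 0 ≤ κ)
  · calc #↥𝒱 * ⨆ V : ↥𝒱, #↥((V : Set Y)) ≤ κ * κ :=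
        mul_le_mul' h𝒱 (ciSup_le' fun V => hsmall V V.2)
    _ = κ := Cardinal.mul_eq_self hκ

lemma card_cover_exists_big {Y : Type u} {κ : Cardinal.{u}} (hκ : ℵ₀ ≤ κ) {A : Set Y}
    {𝒱 : Set (Set Y)} (h𝒱 : #↥𝒱 ≤ κ) (hcov : A ⊆ ⋃₀ 𝒱) (hA : κ < #↥A) :
    ∃ V ∈ 𝒱, κ < #↥V := by
  by_contra h
  push_neg at h
  exact absurd (card_cover_le hκ h𝒱 hcov h) (not_le.2 hA)

/-- In a functionally Hausdorff space, the intersection of all open neighbourhoods of a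
point is that singleton. -/
lemma fh_sInter {Y : Type u} [TopologicalSpace Y] (hY : FunctionallyHausdorff Y) (y : Y) :
    ⋂₀ {U : Set Y | IsOpen U ∧ y ∈ U} = {y} := by
  apply Set.Subset.antisymm
  · intro z hz
    rw [Set.mem_singleton_iff]
    by_contra hzy
    obtain ⟨f, hfc, hfy, hfz⟩ := hY y z (fun h => hzy h.symm)
    have hUopen : IsOpen {w | (f w : ℝ) < 1} :=
      isOpen_lt (continuous_subtype_val.comp hfc) continuous_const
    have hyU : y ∈ {w | (f w : ℝ) < 1} := by
      show (f y : ℝ) < 1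
      rw [hfy]
      norm_num
    have hzU := hz _ ⟨hUopen, hyU⟩
    have : (f z : ℝ) < 1 := hzU
    rw [hfz] at this
    norm_num at this
  · intro z hz
    rw [Set.mem_singleton_iff] at hz
    subst hz
    intro U hU
    exact hU.2

/-- The key splitting lemma: a subset of a functionally Hausdorff space of small
pseudocharacter which is `κ`-Lindelöf (relative to the ambient space) and has cardinality
`> κ` admits a continuous function to `[0,1]` whose fibers at `0` and `1` both meet the
set in `> κ` points. -/
lemma split {Y : Type u} [TopologicalSpace Y] (hY : FunctionallyHausdorff Y)
    {κ : Cardinal.{u}} (hκ : ℵ₀ ≤ κ)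
    (hψ : ∀ y : Y, ∃ 𝒰 : Set (Set Y), #↥𝒰 ≤ κ ∧ (∀ U ∈ 𝒰, IsOpen U ∧ y ∈ U) ∧
      ⋂₀ 𝒰 = ⋂₀ {U : Set Y | IsOpen U ∧ y ∈ U})
    {A : Set Y}
    (hLin : ∀ 𝒞 : Set (Set Y), (∀ C ∈ 𝒞, IsOpen C) → A ⊆ ⋃₀ 𝒞 →
      ∃ 𝒟 ⊆ 𝒞, #↥𝒟 ≤ κ ∧ A ⊆ ⋃₀ 𝒟)
    (hA : κ < #↥A) :
    ∃ φ : Y → unitInterval, Continuous φ ∧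
      κ < #↥(A ∩ φ ⁻¹' {0}) ∧ κ < #↥(A ∩ φ ⁻¹' {1}) := by
  by_contra hgoal
  push_neg at hgoal
  set 𝒪 : Set (Set Y) := {V | IsOpen V ∧ #↥(A ∩ V) ≤ κ} with h𝒪
  have hOopen : ∀ V ∈ 𝒪, IsOpen V := fun V hV => hV.1
  have hpair : ∀ y₀ y₁ : Y, y₀ ≠ y₁ → y₀ ∈ ⋃₀ 𝒪 ∨ y₁ ∈ ⋃₀ 𝒪 := by
    intro y₀ y₁ hne
    obtain ⟨f₀, hf₀c, hf₀0, hf₀1⟩ := hY y₀ y₁ hne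
    set φ : Y → unitInterval :=
      fun y => Set.projIcc (0:ℝ) 1 zero_le_one (3 * (f₀ y : ℝ) - 1) with hφ
    have hφc : Continuous φ := by
      apply continuous_projIcc.comp
      exact (continuous_const.mul (continuous_subtype_val.comp hf₀c)).sub continuous_const
    have hlow : ∀ y : Y, (f₀ y : ℝ) < 1/3 → φ y = 0 := by
      intro y hy
      have h1 : (3 * (f₀ y : ℝ) - 1) ≤ 0 := by linarith
      show Set.projIcc (0:ℝ) 1 zero_le_one (3 * (f₀ y : ℝ) - 1) = 0
      rw [Set.projIcc_of_le_left _ h1]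
      rfl
    have hhigh : ∀ y : Y, (2/3 : ℝ) < (f₀ y : ℝ) → φ y = 1 := by
      intro y hy
      have h1 : (1:ℝ) ≤ 3 * (f₀ y : ℝ) - 1 := by linarith
      show Set.projIcc (0:ℝ) 1 zero_le_one (3 * (f₀ y : ℝ) - 1) = 1
      rw [Set.projIcc_of_right_le _ h1]
      rfl
    rcases lt_or_ge κ (#↥(A ∩ φ ⁻¹' {0})) with h0 | h0
    · have h1 := hgoal φ hφc h0
      right
      refine ⟨{y | (2/3 : ℝ) < (f₀ y : ℝ)},
        ⟨isOpen_lt continuous_const (continuous_subtype_val.comp hf₀c), ?_⟩, ?_⟩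
      · refine le_trans (Cardinal.mk_le_mk_of_subset ?_) h1
        rintro a ⟨ha, hv⟩
        exact ⟨ha, hhigh a hv⟩
      · show (2/3 : ℝ) < (f₀ y₁ : ℝ)
        rw [hf₀1]
        norm_num
    · left
      refine ⟨{y | (f₀ y : ℝ) < 1/3},
        ⟨isOpen_lt (continuous_subtype_val.comp hf₀c) continuous_const, ?_⟩, ?_⟩
      · refine le_trans (Cardinal.mk_le_mk_of_subset ?_) h0
        rintro a ⟨ha, hv⟩
        exact ⟨ha, hlow a hv⟩
      · show (f₀ y₀ : ℝ) < 1/3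
        rw [hf₀0]
        norm_num
  by_cases hcov : A ⊆ ⋃₀ 𝒪
  · obtain ⟨𝒟, h𝒟sub, h𝒟card, h𝒟cov⟩ := hLin 𝒪 hOopen hcov
    have hle : #↥A ≤ κ := by
      apply card_cover_le hκ (𝒱 := (fun V => A ∩ V) '' 𝒟)
        (le_trans Cardinal.mk_image_le h𝒟card)
      · intro a ha
        obtain ⟨V, hV, haV⟩ := h𝒟cov ha
        exact ⟨A ∩ V, ⟨V, hV, rfl⟩, ha, haV⟩
      · rintro _ ⟨V, hV, rfl⟩
        exact (h𝒟sub hV).2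
    exact absurd hle (not_le.2 hA)
  · obtain ⟨ystar, hystarA, hystar⟩ : ∃ y ∈ A, y ∉ ⋃₀ 𝒪 := by
      by_contra h
      push_neg at h
      exact hcov h
    obtain ⟨𝒰, h𝒰card, h𝒰nb, h𝒰eq⟩ := hψ ystar
    have hsing : ⋂₀ 𝒰 = {ystar} := by
      rw [h𝒰eq]
      exact fh_sInter hY ystar
    by_cases hall : ∀ U ∈ 𝒰, #↥(A \ U) ≤ κ
    · have hle : #↥A ≤ κ := by
        apply card_cover_le hκ (𝒱 := insert {ystar} ((fun U => A \ U) '' 𝒰))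
        · refine le_trans Cardinal.mk_insert_le ?_
          have h1 : #↥((fun U => A \ U) '' 𝒰) ≤ κ := le_trans Cardinal.mk_image_le h𝒰card
          calc #↥((fun U => A \ U) '' 𝒰) + 1 ≤ κ + κ :=
              add_le_add h1 (le_trans (by norm_num) hκ)
          _ = κ := Cardinal.add_eq_self hκ
        · intro a ha
          rcases eq_or_ne a ystar with rfl | hne
          · exact ⟨{a}, Set.mem_insert _ _, rfl⟩
          · have : a ∉ ⋂₀ 𝒰 := by
              rw [hsing]
              exact hne
            obtain ⟨U, hU, haU⟩ : ∃ U ∈ 𝒰, a ∉ U := by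
              by_contra h
              push_neg at h
              exact this (fun U hU => h U hU)
            exact ⟨A \ U, Set.mem_insert_of_mem _ ⟨U, hU, rfl⟩, ha, haU⟩
        · rintro V hV
          rcases hV with rfl | ⟨U, hU, rfl⟩
          · rw [Cardinal.mk_singleton]
            exact le_trans Cardinal.one_le_aleph0 hκ
          · exact hall U hU
      exact absurd hle (not_le.2 hA)
    · push_neg at hall
      obtain ⟨U, hU𝒰, hUbig⟩ := hall
      have hUopen := (h𝒰nb U hU𝒰).1
      have hystarU := (h𝒰nb U hU𝒰).2
      have hcovA : A ⊆ ⋃₀ insert U 𝒪 := by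
        intro a ha
        rcases eq_or_ne a ystar with rfl | hne
        · exact ⟨U, Set.mem_insert _ _, hystarU⟩
        · rcases hpair a ystar hne with h | h
          · obtain ⟨V, hV, haV⟩ := h
            exact ⟨V, Set.mem_insert_of_mem _ hV, haV⟩
          · exact absurd h hystar
      obtain ⟨𝒟, h𝒟sub, h𝒟card, h𝒟cov⟩ := hLin (insert U 𝒪)
        (by
          rintro C hC
          rcases hC with rfl | hC
          · exact hUopen
          · exact hC.1) hcovA
      have hsmall : #↥(A \ U) ≤ κ := by
        apply card_cover_le hκ (𝒱 := (fun V => (A \ U) ∩ V) '' (𝒟 \ {U}))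
        · exact le_trans Cardinal.mk_image_le
            (le_trans (Cardinal.mk_le_mk_of_subset Set.diff_subset) h𝒟card)
        · intro a ha
          obtain ⟨V, hV𝒟, haV⟩ := h𝒟cov ha.1
          have hVne : V ≠ U := fun h => ha.2 (h ▸ haV)
          exact ⟨_, ⟨V, ⟨hV𝒟, hVne⟩, rfl⟩, ha, haV⟩
        · rintro _ ⟨V, ⟨hV𝒟, hVne⟩, rfl⟩
          have hVO : V ∈ 𝒪 := by
            rcases h𝒟sub hV𝒟 with rfl | h
            · exact absurd rfl hVne
            · exact h
          refine le_trans (Cardinal.mk_le_mk_of_subset ?_) hVO.2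
          rintro a ⟨ha, haV⟩
          exact ⟨ha.1, haV⟩
      exact absurd hsmall (not_le.2 hUbig)

/-- The image of a closed subset of a `κ`-Lindelöf space is `κ`-Lindelöf. -/
lemma klin_image {P : Type u} {Y : Type u} [TopologicalSpace P] [TopologicalSpace Y]
    {κ : Cardinal.{u}}
    (hLP : ∀ U : Set (Set P), (∀ u ∈ U, IsOpen u) → ⋃₀ U = Set.univ →
      ∃ V ⊆ U, #↥V ≤ κ ∧ ⋃₀ V = Set.univ)
    {h : P → Y} (hh : Continuous h) {B : Set P} (hB : IsClosed B)
    (𝒞 : Set (Set Y)) (h𝒞 : ∀ C ∈ 𝒞, IsOpen C) (hcov : h '' B ⊆ ⋃₀ 𝒞) :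
    ∃ 𝒟 ⊆ 𝒞, #↥𝒟 ≤ κ ∧ h '' B ⊆ ⋃₀ 𝒟 := by
  classical
  set U : Set (Set P) := insert Bᶜ ((fun C => h ⁻¹' C) '' 𝒞) with hU
  have hUopen : ∀ u ∈ U, IsOpen u := by
    rintro u hu
    rcases hu with rfl | ⟨C, hC, rfl⟩
    · exact hB.isOpen_compl
    · exact (h𝒞 C hC).preimage hh
  have hUcov : ⋃₀ U = Set.univ := by
    apply Set.eq_univ_of_forall
    intro p
    by_cases hp : p ∈ B
    · obtain ⟨C, hC, hhp⟩ := hcov ⟨p, hp, rfl⟩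
      exact ⟨h ⁻¹' C, Set.mem_insert_of_mem _ ⟨C, hC, rfl⟩, hhp⟩
    · exact ⟨Bᶜ, Set.mem_insert _ _, hp⟩
  obtain ⟨V, hVU, hVcard, hVcov⟩ := hLP U hUopen hUcov
  set F : ↥V → Set Y := fun v =>
    if hv : ∃ C ∈ 𝒞, (v : Set P) = h ⁻¹' C then hv.choose else ∅ with hF
  refine ⟨Set.range F ∩ 𝒞, Set.inter_subset_right, ?_, ?_⟩
  · exact le_trans (Cardinal.mk_le_mk_of_subset Set.inter_subset_left)
      (le_trans Cardinal.mk_range_le hVcard)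
  · rintro y ⟨p, hp, rfl⟩
    have hpv : p ∈ ⋃₀ V := by
      rw [hVcov]
      trivial
    obtain ⟨v, hvV, hpv⟩ := hpv
    have hvU : v ∈ U := hVU hvV
    rcases hvU with rfl | ⟨C, hC, hveq⟩
    · exact absurd hp hpv
    · have hv : ∃ C ∈ 𝒞, (v : Set P) = h ⁻¹' C := ⟨C, hC, hveq.symm⟩
      have hFv : F ⟨v, hvV⟩ = hv.choose := by
        rw [hF]
        exact dif_pos hv
      obtain ⟨hch𝒞, hcheq⟩ := hv.choose_spec
      refine ⟨F ⟨v, hvV⟩, ⟨⟨⟨v, hvV⟩, rfl⟩, by rw [hFv]; exact hch𝒞⟩, ?_⟩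
      rw [hFv]
      have : p ∈ h ⁻¹' hv.choose := by
        rw [← hcheq]
        exact hpv
      exact this

/-- Shrinking lemma: inside a compactification, we can shrink a set with large image so
that the closure of its embedded image lies in a given open set containing `range e`. -/
lemma shrink {P K Y : Type u} [TopologicalSpace P] [TopologicalSpace K] [TopologicalSpace Y]
    [CompactSpace K] [T2Space K] {κ : Cardinal.{u}} (hκ : ℵ₀ ≤ κ)
    (hLP : ∀ U : Set (Set P), (∀ u ∈ U, IsOpen u) → ⋃₀ U = Set.univ →
      ∃ V ⊆ U, #↥V ≤ κ ∧ ⋃₀ V = Set.univ)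
    {e : P → K} (he : Continuous e) (h : P → Y)
    {Gn : Set K} (hGn : IsOpen Gn) (hr : Set.range e ⊆ Gn)
    {C : Set P} (hbig : κ < #↥(h '' C)) :
    ∃ W : Set K, IsOpen W ∧ closure W ⊆ Gn ∧ κ < #↥(h '' (C ∩ e ⁻¹' W)) := by
  set U : Set (Set P) := {v | ∃ W : Set K, IsOpen W ∧ closure W ⊆ Gn ∧ v = e ⁻¹' W} with hU
  have hUopen : ∀ u ∈ U, IsOpen u := by
    rintro u ⟨W, hW, _, rfl⟩
    exact hW.preimage he
  have hUcov : ⋃₀ U = Set.univ := by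
    apply Set.eq_univ_of_forall
    intro p
    have hnh : Gn ∈ nhds (e p) := hGn.mem_nhds (hr ⟨p, rfl⟩)
    obtain ⟨t, ht, htc, hts⟩ := exists_mem_nhds_isClosed_subset hnh
    refine ⟨e ⁻¹' interior t, ⟨interior t, isOpen_interior,
      (closure_minimal interior_subset htc).trans hts, rfl⟩, ?_⟩
    exact Set.mem_preimage.2 (mem_interior_iff_mem_nhds.2 ht)
  obtain ⟨V, hVU, hVcard, hVcov⟩ := hLP U hUopen hUcov
  have hbig2 : ∃ v ∈ V, κ < #↥(h '' (C ∩ v)) := by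
    have hex : ∃ S ∈ (fun v => h '' (C ∩ v)) '' V, κ < #↥S := by
      apply card_cover_exists_big hκ (le_trans Cardinal.mk_image_le hVcard) _ hbig
      rintro y ⟨p, hp, rfl⟩
      have : p ∈ ⋃₀ V := by
        rw [hVcov]
        trivial
      obtain ⟨v, hvV, hpv⟩ := this
      exact ⟨h '' (C ∩ v), ⟨v, hvV, rfl⟩, ⟨p, ⟨hp, hpv⟩, rfl⟩⟩
    obtain ⟨S, ⟨v, hvV, rfl⟩, hS⟩ := hex
    exact ⟨v, hvV, hS⟩
  obtain ⟨v, hvV, hvbig⟩ := hbig2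
  obtain ⟨W, hWopen, hWsub, rfl⟩ := hVU hvV
  exact ⟨W, hWopen, hWsub, hvbig⟩

section Construction

variable {P K Y : Type u} [TopologicalSpace P] [TopologicalSpace K] [TopologicalSpace Y]

/-- Node data for the binary tree construction. -/
structure NodeData (h : P → Y) (e : P → K) (G : ℕ → Set K) (κ : Cardinal.{u}) (n : ℕ) :
    Type u where
  B : Set P
  closed : IsClosed B
  big : κ < #↥(h '' B)
  sub : closure (e '' B) ⊆ G n

/-- The inductive step hypothesis: every node can be split into two children on which a
continuous function to `[0,1]` takes the constant values `0` and `1` respectively. -/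
def StepHyp (h : P → Y) (e : P → K) (G : ℕ → Set K) (κ : Cardinal.{u}) : Prop :=
  ∀ (n : ℕ) (N : NodeData h e G κ n),
    ∃ (φ : Y → unitInterval) (Bc : Bool → NodeData h e G κ (n+1)),
      Continuous φ ∧ ∀ i : Bool, (Bc i).B ⊆ N.B ∧
        ∀ p ∈ (Bc i).B, φ (h p) = (if i then 1 else 0)

variable {h : P → Y} {e : P → K} {G : ℕ → Set K} {κ : Cardinal.{u}}

noncomputable def stepφ (hs : StepHyp h e G κ) (n : ℕ) (N : NodeData h e G κ n) :
    Y → unitInterval := (hs n N).choose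

noncomputable def stepB (hs : StepHyp h e G κ) (n : ℕ) (N : NodeData h e G κ n)
    (i : Bool) : NodeData h e G κ (n+1) := (hs n N).choose_spec.choose i

lemma step_spec (hs : StepHyp h e G κ) (n : ℕ) (N : NodeData h e G κ n) :
    Continuous (stepφ hs n N) ∧ ∀ i : Bool, (stepB hs n N i).B ⊆ N.B ∧
      ∀ p ∈ (stepB hs n N i).B, stepφ hs n N (h p) = (if i then 1 else 0) :=
  (hs n N).choose_spec.choose_spec

/-- The binary tree of nodes; a node is indexed by the *reversed* list of choices. -/
noncomputable def tree (hs : StepHyp h e G κ) (root : NodeData h e G κ 0) :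
    (s : List Bool) → NodeData h e G κ s.length
  | [] => root
  | i :: s => stepB hs s.length (tree hs root s) i

noncomputable def treeφ (hs : StepHyp h e G κ) (root : NodeData h e G κ 0)
    (s : List Bool) : Y → unitInterval := stepφ hs s.length (tree hs root s)

lemma treeφ_cont (hs : StepHyp h e G κ) (root : NodeData h e G κ 0) (s : List Bool) :
    Continuous (treeφ hs root s) := (step_spec hs _ _).1

lemma tree_cons_subset (hs : StepHyp h e G κ) (root : NodeData h e G κ 0)
    (i : Bool) (s : List Bool) :
    (tree hs root (i :: s)).B ⊆ (tree hs root s).B :=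
  ((step_spec hs s.length (tree hs root s)).2 i).1

lemma tree_cons_val (hs : StepHyp h e G κ) (root : NodeData h e G κ 0)
    (i : Bool) (s : List Bool) :
    ∀ p ∈ (tree hs root (i :: s)).B, treeφ hs root s (h p) = (if i then 1 else 0) :=
  ((step_spec hs s.length (tree hs root s)).2 i).2

/-- The associated closed "codes" in `Y`. -/
noncomputable def EY (hs : StepHyp h e G κ) (root : NodeData h e G κ 0) :
    List Bool → Set Y
  | [] => Set.univ
  | i :: s => EY hs root s ∩ (treeφ hs root s) ⁻¹' {if i then 1 else 0}

lemma EY_closed (hs : StepHyp h e G κ) (root : NodeData h e G κ 0) :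
    ∀ s : List Bool, IsClosed (EY hs root s)
  | [] => isClosed_univ
  | i :: s => (EY_closed hs root s).inter
      (IsClosed.preimage (treeφ_cont hs root s) isClosed_singleton)

lemma EY_cons_subset (hs : StepHyp h e G κ) (root : NodeData h e G κ 0)
    (i : Bool) (s : List Bool) : EY hs root (i :: s) ⊆ EY hs root s :=
  Set.inter_subset_left

lemma mem_EY_of_mem_tree (hs : StepHyp h e G κ) (root : NodeData h e G κ 0) :
    ∀ (s : List Bool) (p : P), p ∈ (tree hs root s).B → h p ∈ EY hs root s
  | [], _, _ => Set.mem_univ _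
  | i :: s, p, hp => ⟨mem_EY_of_mem_tree hs root s p (tree_cons_subset hs root i s hp),
      tree_cons_val hs root i s p hp⟩

lemma bool01_ne : (if true then (1:unitInterval) else 0) ≠ (if false then (1:unitInterval) else 0) := by
  simp only [if_true, if_false]
  intro hcon
  have := congrArg (Subtype.val) hcon
  norm_num at this

lemma EY_disjoint (hs : StepHyp h e G κ) (root : NodeData h e G κ 0) :
    ∀ (s t : List Bool), s.length = t.length → s ≠ t →
      EY hs root s ∩ EY hs root t = ∅ := by
  intro s
  induction s with
  | nil =>
    intro t hlen hne
    cases t with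
    | nil => exact absurd rfl hne
    | cons j t => simp at hlen
  | cons i s ih =>
    intro t hlen hne
    cases t with
    | nil => simp at hlen
    | cons j t =>
      have hlen' : s.length = t.length := by simpa using hlen
      by_cases hst : s = t
      · subst hst
        have hij : i ≠ j := by
          intro h
          exact hne (by rw [h])
        apply Set.eq_empty_of_forall_notMem
        rintro y ⟨⟨_, hy1⟩, ⟨_, hy2⟩⟩
        rw [Set.mem_preimage, Set.mem_singleton_iff] at hy1 hy2
        have : (if i then (1:unitInterval) else 0) = (if j then 1 else 0) := by
          rw [← hy1, ← hy2]
        cases i <;> cases j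
        · exact hij rfl
        · exact bool01_ne this.symm
        · exact bool01_ne this
        · exact hij rfl
      · have := ih t hlen' hst
        apply Set.eq_empty_of_forall_notMem
        rintro y ⟨hy1, hy2⟩
        have hy : y ∈ EY hs root s ∩ EY hs root t := ⟨hy1.1, hy2.1⟩
        rw [this] at hy
        exact hy

/-- Reversed prefix lists of a branch. -/
def branchList (b : ℕ → Bool) : ℕ → List Bool
  | 0 => []
  | n+1 => b n :: branchList b n

lemma branchList_length (b : ℕ → Bool) : ∀ n, (branchList b n).length = n
  | 0 => rfl
  | n+1 => by simp [branchList, branchList_length b n]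

lemma branchList_congr {b b' : ℕ → Bool} : ∀ n, (∀ i, i < n → b i = b' i) →
    branchList b n = branchList b' n
  | 0, _ => rfl
  | n+1, hbb => by
    simp only [branchList]
    rw [hbb n (Nat.lt_succ_self n), branchList_congr n (fun i hi => hbb i (Nat.lt_succ_of_lt hi))]

/-- The step hypothesis holds under our assumptions. -/
lemma stepHyp_holds {P K Y : Type u} [TopologicalSpace P] [TopologicalSpace K]
    [TopologicalSpace Y] [CompactSpace K] [T2Space K] {κ : Cardinal.{u}} (hκ : ℵ₀ ≤ κ)
    (hY : FunctionallyHausdorff Y)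
    (hψ : ∀ y : Y, ∃ 𝒰 : Set (Set Y), #↥𝒰 ≤ κ ∧ (∀ U ∈ 𝒰, IsOpen U ∧ y ∈ U) ∧
      ⋂₀ 𝒰 = ⋂₀ {U : Set Y | IsOpen U ∧ y ∈ U})
    (hLP : ∀ U : Set (Set P), (∀ u ∈ U, IsOpen u) → ⋃₀ U = Set.univ →
      ∃ V ⊆ U, #↥V ≤ κ ∧ ⋃₀ V = Set.univ)
    {e : P → K} (he : Continuous e) {h : P → Y} (hh : Continuous h)
    {G : ℕ → Set K} (hGopen : ∀ n, IsOpen (G n)) (hGr : ∀ n, Set.range e ⊆ G n) :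
    StepHyp h e G κ := by
  intro n N
  have hKlin : ∀ 𝒞 : Set (Set Y), (∀ C ∈ 𝒞, IsOpen C) → h '' N.B ⊆ ⋃₀ 𝒞 →
      ∃ 𝒟 ⊆ 𝒞, #↥𝒟 ≤ κ ∧ h '' N.B ⊆ ⋃₀ 𝒟 :=
    fun 𝒞 h1 h2 => klin_image hLP hh N.closed 𝒞 h1 h2
  obtain ⟨φ, hφc, h0, h1⟩ := split hY hκ hψ hKlin N.big
  have mk_child : ∀ i : Bool, ∃ Bc : NodeData h e G κ (n+1),
      Bc.B ⊆ N.B ∧ ∀ p ∈ Bc.B, φ (h p) = (if i then 1 else 0) := by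
    intro i
    set Ci : Set P := N.B ∩ (fun p => φ (h p)) ⁻¹' {if i then (1:unitInterval) else 0}
      with hCi
    have hCic : IsClosed Ci :=
      N.closed.inter (IsClosed.preimage (hφc.comp hh) isClosed_singleton)
    have hCbig : κ < #↥(h '' Ci) := by
      have hsub : h '' N.B ∩ φ ⁻¹' {if i then (1:unitInterval) else 0} ⊆ h '' Ci := by
        rintro y ⟨⟨p, hp, rfl⟩, hy⟩
        exact ⟨p, ⟨hp, hy⟩, rfl⟩
      refine lt_of_lt_of_le ?_ (Cardinal.mk_le_mk_of_subset hsub)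
      cases i
      · simpa using h0
      · simpa using h1
    obtain ⟨W, hWo, hWsub, hWbig⟩ := shrink hκ hLP he h (hGopen (n+1)) (hGr (n+1)) hCbig
    refine ⟨⟨closure (Ci ∩ e ⁻¹' W), isClosed_closure, ?_, ?_⟩, ?_, ?_⟩
    · exact lt_of_lt_of_le hWbig
        (Cardinal.mk_le_mk_of_subset (Set.image_mono subset_closure))
    · have hss1 : e '' closure (Ci ∩ e ⁻¹' W) ⊆ closure (e '' (Ci ∩ e ⁻¹' W)) :=
        image_closure_subset_closure_image he
      have hss2 : e '' (Ci ∩ e ⁻¹' W) ⊆ W := by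
        rintro k ⟨p, hp, rfl⟩
        exact hp.2
      calc closure (e '' closure (Ci ∩ e ⁻¹' W))
          ⊆ closure (closure (e '' (Ci ∩ e ⁻¹' W))) := closure_mono hss1
        _ = closure (e '' (Ci ∩ e ⁻¹' W)) := closure_closure
        _ ⊆ closure W := closure_mono hss2
        _ ⊆ G (n+1) := hWsub
    · exact (closure_minimal Set.inter_subset_left hCic).trans Set.inter_subset_left
    · intro p hp
      have hpc : p ∈ Ci := closure_minimal Set.inter_subset_left hCic hp
      exact hpc.2
  obtain ⟨B0, hB0sub, hB0val⟩ := mk_child false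
  obtain ⟨B1, hB1sub, hB1val⟩ := mk_child true
  refine ⟨φ, fun i => if i then B1 else B0, hφc, ?_⟩
  intro i
  cases i
  · exact ⟨hB0sub, hB0val⟩
  · exact ⟨hB1sub, hB1val⟩

/-- Existence of a root node. -/
lemma root_exists {P K Y : Type u} [TopologicalSpace P] [TopologicalSpace K]
    [TopologicalSpace Y] [CompactSpace K] [T2Space K] {κ : Cardinal.{u}} (hκ : ℵ₀ ≤ κ)
    (hLP : ∀ U : Set (Set P), (∀ u ∈ U, IsOpen u) → ⋃₀ U = Set.univ →
      ∃ V ⊆ U, #↥V ≤ κ ∧ ⋃₀ V = Set.univ)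
    {e : P → K} (he : Continuous e) {h : P → Y}
    {G : ℕ → Set K} (hGopen : ∀ n, IsOpen (G n)) (hGr : ∀ n, Set.range e ⊆ G n)
    (hbig : κ < #↥(h '' (Set.univ : Set P))) :
    Nonempty (NodeData h e G κ 0) := by
  obtain ⟨W, hWo, hWsub, hWbig⟩ := shrink hκ hLP he h (hGopen 0) (hGr 0) hbig
  refine ⟨⟨closure ((Set.univ : Set P) ∩ e ⁻¹' W), isClosed_closure, ?_, ?_⟩⟩
  · exact lt_of_lt_of_le hWbig
      (Cardinal.mk_le_mk_of_subset (Set.image_mono subset_closure))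
  · have hss1 : e '' closure ((Set.univ : Set P) ∩ e ⁻¹' W) ⊆
        closure (e '' ((Set.univ : Set P) ∩ e ⁻¹' W)) :=
      image_closure_subset_closure_image he
    have hss2 : e '' ((Set.univ : Set P) ∩ e ⁻¹' W) ⊆ W := by
      rintro k ⟨p, hp, rfl⟩
      exact hp.2
    calc closure (e '' closure ((Set.univ : Set P) ∩ e ⁻¹' W))
        ⊆ closure (closure (e '' ((Set.univ : Set P) ∩ e ⁻¹' W))) := closure_mono hss1
      _ = closure (e '' ((Set.univ : Set P) ∩ e ⁻¹' W)) := closure_closure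
      _ ⊆ closure W := closure_mono hss2
      _ ⊆ G 0 := hWsub

lemma node_nonempty {P K Y : Type u} [TopologicalSpace P] [TopologicalSpace K]
    [TopologicalSpace Y] {h : P → Y} {e : P → K} {G : ℕ → Set K} {κ : Cardinal.{u}}
    {n : ℕ} (N : NodeData h e G κ n) : N.B.Nonempty := by
  by_contra hc
  rw [Set.not_nonempty_iff_eq_empty] at hc
  have := N.big
  rw [hc] at this
  simp only [Set.image_empty, Cardinal.mk_emptyCollection] at this
  exact absurd this (not_lt.2 (zero_le : 0 ≤ κ))

lemma EY_branch_anti (hs : StepHyp h e G κ) (root : NodeData h e G κ 0)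
    (b : ℕ → Bool) {m n : ℕ} (hmn : m ≤ n) :
    EY hs root (branchList b n) ⊆ EY hs root (branchList b m) := by
  have hanti : Antitone (fun n => EY hs root (branchList b n)) := by
    apply antitone_nat_of_succ_le
    intro n
    exact EY_cons_subset hs root (b n) (branchList b n)
  exact hanti hmn

end Construction

end Stmt2Aux

open Stmt2Aux in
theorem stmt2 {X P Y : Type u} [TopologicalSpace X] [TopologicalSpace P] [TopologicalSpace Y]
    (hP : IsCechComplete P) (g : P → X) (hg : Continuous g) (hgs : Function.Surjective g)
    (hscat : ∀ K : Set X, IsCompact K → IsScatteredSet K)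
    (hY : FunctionallyHausdorff Y) (f : X → Y) (hf : Continuous f) :
    #↥(Set.range f) ≤ max (lindelofNumber P) (pseudocharacter Y) := by
  classical
  set κ : Cardinal.{u} := max (lindelofNumber P) (pseudocharacter Y) with hκdef
  have hLmem : lindelofNumber P ∈ {κ : Cardinal.{u} | ℵ₀ ≤ κ ∧
      ∀ U : Set (Set P), (∀ u ∈ U, IsOpen u) → ⋃₀ U = Set.univ →
        ∃ V ⊆ U, #↥V ≤ κ ∧ ⋃₀ V = Set.univ} := by
    apply csInf_mem
    refine ⟨max ℵ₀ (2 ^ #P), le_max_left _ _, ?_⟩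
    intro U hU hcov
    refine ⟨U, Set.Subset.rfl, ?_, hcov⟩
    refine le_trans (Cardinal.mk_set_le U) ?_
    rw [Cardinal.mk_set]
    exact le_max_right _ _
  have hψmem : pseudocharacter Y ∈ {κ : Cardinal.{u} | ℵ₀ ≤ κ ∧
      ∀ y : Y, ∃ 𝒰 : Set (Set Y), #↥𝒰 ≤ κ ∧ (∀ U ∈ 𝒰, IsOpen U ∧ y ∈ U) ∧
        ⋂₀ 𝒰 = ⋂₀ {U : Set Y | IsOpen U ∧ y ∈ U}} := by
    apply csInf_mem
    refine ⟨max ℵ₀ (2 ^ #Y), le_max_left _ _, ?_⟩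
    intro y
    refine ⟨{U : Set Y | IsOpen U ∧ y ∈ U}, ?_, fun U hU => hU, rfl⟩
    refine le_trans (Cardinal.mk_set_le _) ?_
    rw [Cardinal.mk_set]
    exact le_max_right _ _
  have hκinf : ℵ₀ ≤ κ := le_trans hLmem.1 (le_max_left _ _)
  have hLP : ∀ U : Set (Set P), (∀ u ∈ U, IsOpen u) → ⋃₀ U = Set.univ →
      ∃ V ⊆ U, #↥V ≤ κ ∧ ⋃₀ V = Set.univ := by
    intro U h1 h2
    obtain ⟨V, hVU, hVc, hVcov⟩ := hLmem.2 U h1 h2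
    exact ⟨V, hVU, hVc.trans (le_max_left _ _), hVcov⟩
  have hψ : ∀ y : Y, ∃ 𝒰 : Set (Set Y), #↥𝒰 ≤ κ ∧ (∀ U ∈ 𝒰, IsOpen U ∧ y ∈ U) ∧
      ⋂₀ 𝒰 = ⋂₀ {U : Set Y | IsOpen U ∧ y ∈ U} := by
    intro y
    obtain ⟨𝒰, h1, h2, h3⟩ := hψmem.2 y
    exact ⟨𝒰, h1.trans (le_max_right _ _), h2, h3⟩
  by_contra hbig
  rw [not_le] at hbig
  obtain ⟨K, tK, e, hKcpt, hKt2, hEmb, -, hGδ⟩ := hP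
  haveI := hKcpt
  haveI := hKt2
  set h : P → Y := f ∘ g with hh
  have hhc : Continuous h := hf.comp hg
  obtain ⟨G, hGopen, hGeq⟩ := isGδ_iff_eq_iInter_nat.mp hGδ
  have hGr : ∀ n, Set.range e ⊆ G n := fun n => by
    rw [hGeq]; exact Set.iInter_subset G n
  have hbig' : κ < #↥(h '' (Set.univ : Set P)) := by
    rw [Set.image_univ, hh, Set.range_comp, hgs.range_eq, Set.image_univ]
    exact hbig
  have hstep : StepHyp h e G κ :=
    stepHyp_holds hκinf hY hψ hLP hEmb.continuous hhc hGopen hGr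
  obtain ⟨root⟩ := root_exists hκinf hLP hEmb.continuous hGopen hGr hbig'
  -- the limit compact set
  set Fset : List Bool → Set K := fun s => closure (e '' (tree hstep root s).B) with hFset
  set CC : Set K := ⋂ n : ℕ, ⋃ s ∈ {l : List Bool | l.length = n}, Fset s with hCCdef
  have hCCclosed : IsClosed CC := isClosed_iInter fun n =>
    Set.Finite.isClosed_biUnion (List.finite_length_eq Bool n) fun s _ => isClosed_closure
  have hFsetG : ∀ s : List Bool, Fset s ⊆ G s.length := fun s => (tree hstep root s).sub
  have hCCrange : CC ⊆ Set.range e := by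
    intro k hk
    rw [hGeq]
    refine Set.mem_iInter.2 fun n => ?_
    obtain ⟨s, hslen, hks⟩ := Set.mem_iUnion₂.1 (Set.mem_iInter.1 hk n)
    have h1 := hFsetG s hks
    rwa [hslen] at h1
  have hpull : ∀ s : List Bool, ∀ p : P, e p ∈ Fset s → p ∈ (tree hstep root s).B := by
    intro s p hp
    have h1 : p ∈ closure (tree hstep root s).B := by
      rw [hEmb.closure_eq_preimage_closure_image]
      exact hp
    rwa [(tree hstep root s).closed.closure_eq] at h1
  set W : Set X := g '' (e ⁻¹' CC) with hWdef
  have hWcpt : IsCompact W := by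
    have h1 : IsCompact (e ⁻¹' CC) := by
      rw [hEmb.isCompact_iff, Set.image_preimage_eq_inter_range,
        Set.inter_eq_self_of_subset_left hCCrange]
      exact hCCclosed.isCompact
    exact h1.image hg
  have hscatW := hscat W hWcpt
  have hcovW : ∀ x ∈ W, ∀ n : ℕ, ∃ s : List Bool, s.length = n ∧ f x ∈ EY hstep root s := by
    rintro x ⟨p, hp, rfl⟩ n
    obtain ⟨s, hslen, hks⟩ := Set.mem_iUnion₂.1 (Set.mem_iInter.1 hp n)
    exact ⟨s, hslen, mem_EY_of_mem_tree hstep root s p (hpull s p hks)⟩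
  have huniq : ∀ (s t : List Bool), s.length = t.length → ∀ y : Y,
      y ∈ EY hstep root s → y ∈ EY hstep root t → s = t := by
    intro s t hlen y hys hyt
    by_contra hne
    have h1 := EY_disjoint hstep root s t hlen hne
    rw [Set.eq_empty_iff_forall_notMem] at h1
    exact h1 y ⟨hys, hyt⟩
  have hbranch : ∀ b : ℕ → Bool, ∃ x ∈ W, ∀ n, f x ∈ EY hstep root (branchList b n) := by
    intro b
    set t : ℕ → Set K := fun n => Fset (branchList b n) with ht
    have hdec : ∀ n, t (n+1) ⊆ t n := fun n =>
      closure_mono (Set.image_mono (tree_cons_subset hstep root (b n) (branchList b n)))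
    have hne : ∀ n, (t n).Nonempty := fun n =>
      ((node_nonempty (tree hstep root (branchList b n))).image e).mono subset_closure
    obtain ⟨q, hq⟩ := IsCompact.nonempty_iInter_of_sequence_nonempty_isCompact_isClosed t
      hdec hne isClosed_closure.isCompact (fun n => isClosed_closure)
    have hqrange : q ∈ Set.range e := by
      rw [hGeq]
      refine Set.mem_iInter.2 fun n => ?_
      have h1 := hFsetG (branchList b n) (Set.mem_iInter.1 hq n)
      rwa [branchList_length] at h1
    obtain ⟨p, rfl⟩ := hqrange
    have hpB : ∀ n, p ∈ (tree hstep root (branchList b n)).B :=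
      fun n => hpull _ p (Set.mem_iInter.1 hq n)
    have hpC : e p ∈ CC := Set.mem_iInter.2 fun n =>
      Set.mem_iUnion₂.2 ⟨branchList b n, branchList_length b n, Set.mem_iInter.1 hq n⟩
    exact ⟨g p, ⟨p, hpC, rfl⟩, fun n => mem_EY_of_mem_tree hstep root _ p (hpB n)⟩
  have hWne : W.Nonempty := by
    obtain ⟨x, hx, -⟩ := hbranch (fun _ => false)
    exact ⟨x, hx⟩
  -- Zorn's lemma: minimal closed set hitting every branch
  set 𝒟 : Set (Set X) := {D | IsClosed D ∧ ∀ b : ℕ → Bool,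
      (W ∩ D ∩ ⋂ n : ℕ, f ⁻¹' (EY hstep root (branchList b n))).Nonempty} with h𝒟def
  have hEYbcl : ∀ b : ℕ → Bool,
      IsClosed (⋂ n : ℕ, f ⁻¹' (EY hstep root (branchList b n))) :=
    fun b => isClosed_iInter fun n => (EY_closed hstep root _).preimage hf
  have huniv : Set.univ ∈ 𝒟 := by
    refine ⟨isClosed_univ, fun b => ?_⟩
    obtain ⟨x, hxW, hx⟩ := hbranch b
    exact ⟨x, ⟨hxW, trivial⟩, Set.mem_iInter.2 hx⟩
  have hchain : ∀ c ⊆ 𝒟, IsChain (· ⊆ ·) c → c.Nonempty →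
      ∃ lb ∈ 𝒟, ∀ s ∈ c, lb ⊆ s := by
    intro c hc hchain hcne
    refine ⟨⋂₀ c, ⟨isClosed_sInter fun D hD => (hc hD).1, ?_⟩,
      fun s hs => Set.sInter_subset_of_mem hs⟩
    intro b
    have hint := hWcpt.inter_iInter_nonempty (ι := ↥c)
      (fun D => (D : Set X) ∩ ⋂ n : ℕ, f ⁻¹' (EY hstep root (branchList b n)))
      (fun D => (hc D.2).1.inter (hEYbcl b)) ?_
    · obtain ⟨x, hxW, hx⟩ := hint
      refine ⟨x, ⟨hxW, Set.mem_sInter.2 fun D hD => (Set.mem_iInter.1 hx ⟨D, hD⟩).1⟩, ?_⟩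
      obtain ⟨D₀, hD₀⟩ := hcne
      exact (Set.mem_iInter.1 hx ⟨D₀, hD₀⟩).2
    · intro u
      by_cases hu : u.Nonempty
      · obtain ⟨m, hm, hmmin⟩ := u.exists_minimal hu
        obtain ⟨x, hx⟩ := (hc m.2).2 b
        refine ⟨x, hx.1.1, Set.mem_iInter₂.2 fun D hD => ⟨?_, hx.2⟩⟩
        rcases eq_or_ne D m with rfl | hne
        · exact hx.1.2
        · have hne' : (m : Set X) ≠ (D : Set X) := fun hv => hne (Subtype.ext hv.symm)
          rcases hchain.total m.2 D.2 with h1 | h1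
          · exact h1 hx.1.2
          · exfalso
            exact hne' (Set.Subset.antisymm (hmmin hD h1) h1)
      · rw [Finset.not_nonempty_iff_eq_empty] at hu
        subst hu
        simpa using hWne
  obtain ⟨D, -, hmin⟩ := zorn_superset_nonempty 𝒟 hchain Set.univ huniv
  have hDmem : D ∈ 𝒟 := hmin.1
  have hDclosed : IsClosed D := hDmem.1
  obtain ⟨x0, hx0⟩ := hDmem.2 (fun _ => false)
  have hTne : (W ∩ D).Nonempty := ⟨x0, hx0.1⟩
  obtain ⟨x, hxT, U, hUopen, hUx⟩ := hscatW (W ∩ D) Set.inter_subset_left hTne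
  have hxW : x ∈ W := hxT.1
  have hxD : x ∈ D := hxT.2
  have hxU : x ∈ U := by
    have h1 : x ∈ U ∩ (W ∩ D) := hUx.symm ▸ Set.mem_singleton x
    exact h1.1
  -- the branch through x
  choose sfun hslen hsmem using hcovW x hxW
  have hch : ∀ n : ℕ, ∃ i : Bool, sfun (n+1) = i :: sfun n := by
    intro n
    rcases hsf : sfun (n+1) with _ | ⟨i, ttail⟩
    · exfalso
      have h1 := hslen (n+1)
      rw [hsf] at h1
      simp at h1
    · have htl : ttail.length = n := by
        have h1 := hslen (n+1)
        rw [hsf] at h1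
        simpa using h1
      have hmem' : f x ∈ EY hstep root ttail := by
        have h1 := hsmem (n+1)
        rw [hsf] at h1
        exact h1.1
      have heq : ttail = sfun n :=
        huniq ttail (sfun n) (by rw [htl, hslen n]) _ hmem' (hsmem n)
      exact ⟨i, by rw [heq]⟩
  set bx : ℕ → Bool := fun n => (hch n).choose with hbxdef
  have hbxs : ∀ n, sfun (n+1) = bx n :: sfun n := fun n => (hch n).choose_spec
  have hblx : ∀ n, branchList bx n = sfun n := by
    intro n
    induction n with
    | zero => exact (List.length_eq_zero_iff.1 (hslen 0)).symm
    | succ n ih =>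
      show bx n :: branchList bx n = sfun (n+1)
      rw [ih, hbxs n]
  have hxbranch : ∀ n, f x ∈ EY hstep root (branchList bx n) := fun n => by
    rw [hblx n]; exact hsmem n
  -- removing the isolated point
  have hD'not : D ∩ Uᶜ ∉ 𝒟 := by
    intro hmem
    have hDsub := hmin.2 hmem (show D ∩ Uᶜ ≤ D from Set.inter_subset_left)
    exact (hDsub hxD).2 hxU
  obtain ⟨b, hb⟩ : ∃ b : ℕ → Bool,
      W ∩ (D ∩ Uᶜ) ∩ ⋂ n : ℕ, f ⁻¹' (EY hstep root (branchList b n)) = ∅ := by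
    by_contra hcon
    push_neg at hcon
    exact hD'not ⟨hDclosed.inter hUopen.isClosed_compl, fun b => hcon b⟩
  have hdiff : ∀ (b' : ℕ → Bool) (x' : X),
      (∀ n, f x' ∈ EY hstep root (branchList b' n)) → (∃ m, b' m ≠ bx m) → x' ≠ x := by
    intro b' x' hx' hm hxx
    obtain ⟨m, hm⟩ := hm
    subst hxx
    have h1 := hx' (m+1)
    have h2 := hxbranch (m+1)
    have h3 := huniq (branchList b' (m+1)) (branchList bx (m+1))
      (by rw [branchList_length, branchList_length]) _ h1 h2
    simp only [branchList, List.cons.injEq] at h3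
    exact hm h3.1
  have hbbx : b = bx := by
    by_contra hne
    obtain ⟨m, hm⟩ := Function.ne_iff.1 hne
    obtain ⟨x', hx'⟩ := hDmem.2 b
    have hx'branch : ∀ n, f x' ∈ EY hstep root (branchList b n) :=
      fun n => Set.mem_iInter.1 hx'.2 n
    have hx'ne : x' ≠ x := hdiff b x' hx'branch ⟨m, hm⟩
    have hx'T : x' ∈ W ∩ D := hx'.1
    have hx'U : x' ∉ U := by
      intro hxu
      have h1 : x' ∈ U ∩ (W ∩ D) := ⟨hxu, hx'T⟩
      rw [hUx] at h1
      exact hx'ne h1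
    have h2 : x' ∈ W ∩ (D ∩ Uᶜ) ∩ ⋂ n : ℕ, f ⁻¹' (EY hstep root (branchList b n)) :=
      ⟨⟨hx'T.1, hx'T.2, hx'U⟩, hx'.2⟩
    rw [hb] at h2
    exact absurd h2 (Set.notMem_empty x')
  subst hbbx
  -- some finite level is empty
  have hfin : ∃ N : ℕ,
      W ∩ ((D ∩ Uᶜ) ∩ f ⁻¹' (EY hstep root (branchList bx N))) = ∅ := by
    by_contra hcon
    push_neg at hcon
    have hne : ∀ u : Finset ℕ,
        (W ∩ ⋂ n ∈ u, ((D ∩ Uᶜ) ∩ f ⁻¹' (EY hstep root (branchList bx n)))).Nonempty := by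
      intro u
      by_cases hu : u.Nonempty
      · obtain ⟨z, hz⟩ := hcon (u.max' hu)
        refine ⟨z, hz.1, Set.mem_iInter₂.2 fun n hn => ⟨hz.2.1, ?_⟩⟩
        exact EY_branch_anti hstep root bx (u.le_max' n hn) hz.2.2
      · rw [Finset.not_nonempty_iff_eq_empty] at hu
        subst hu
        simpa using hWne
    have hint := hWcpt.inter_iInter_nonempty
      (fun n : ℕ => (D ∩ Uᶜ) ∩ f ⁻¹' (EY hstep root (branchList bx n)))
      (fun n => (hDclosed.inter hUopen.isClosed_compl).inter
        ((EY_closed hstep root _).preimage hf)) hne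
    obtain ⟨z, hzW, hz⟩ := hint
    have h2 : z ∈ W ∩ (D ∩ Uᶜ) ∩ ⋂ n : ℕ, f ⁻¹' (EY hstep root (branchList bx n)) :=
      ⟨⟨hzW, (Set.mem_iInter.1 hz 0).1⟩,
        Set.mem_iInter.2 fun n => (Set.mem_iInter.1 hz n).2⟩
    rw [hb] at h2
    exact absurd h2 (Set.notMem_empty z)
  obtain ⟨N, hN⟩ := hfin
  -- flip bit N of the branch
  set b' : ℕ → Bool := Function.update bx N (!(bx N)) with hb'def
  obtain ⟨x', hx'⟩ := hDmem.2 b'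
  have hx'branch : ∀ n, f x' ∈ EY hstep root (branchList b' n) :=
    fun n => Set.mem_iInter.1 hx'.2 n
  have hb'N : b' N = !(bx N) := Function.update_self _ _ _
  have hblN : branchList b' N = branchList bx N :=
    branchList_congr N (fun i hi => Function.update_of_ne (Nat.ne_of_lt hi) _ _)
  have hx'ne : x' ≠ x := by
    apply hdiff b' x' hx'branch
    exact ⟨N, by rw [hb'N]; cases bx N <;> simp⟩
  have hx'T : x' ∈ W ∩ D := hx'.1
  have hx'U : x' ∉ U := by
    intro hxu
    have h1 : x' ∈ U ∩ (W ∩ D) := ⟨hxu, hx'T⟩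
    rw [hUx] at h1
    exact hx'ne h1
  have hx'mem : x' ∈ W ∩ ((D ∩ Uᶜ) ∩ f ⁻¹' (EY hstep root (branchList bx N))) := by
    refine ⟨hx'T.1, ⟨hx'T.2, hx'U⟩, ?_⟩
    rw [← hblN]
    exact hx'branch N
  rw [hN] at hx'mem
  exact absurd hx'mem (Set.notMem_empty x')
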